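/- Assume f satisfies (f_reg), (f_eq), (f_0), let η ∈ (0,1), d > 1/η, and let u be a solution of the Cauchy problem with datum d on [0,R2]. Set r0 := max{r ∈ [0,R2] : u(s) > η d for all s ∈ [0,r)} and f*(s) = max_{σ∈[1,s]} f(σ). Then r0 ≥ min{ R2 , ((1-η) d p')^{1/p'} · (N / f*(d))^{1/p} }. -/

import Mathlib

open Real Set Filter Topology

noncomputable def phip (p s : ℝ) : ℝ := |s| ^ (p - 2) * s

def Freg (f : ℝ → ℝ) : Prop :=
  ContinuousOn f (Ici 0) ∧ ContDiffOn ℝ 1 f (Ioi 0)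

def Feq (f : ℝ → ℝ) : Prop :=
  f 0 = 0 ∧ f 1 = 0 ∧ (∀ s : ℝ, 0 < s → s < 1 → f s < 0) ∧ (∀ s : ℝ, 1 < s → 0 < f s)

def Fzero (p : ℝ) (f : ℝ → ℝ) : Prop :=
  ∃ c : ℝ, ∀ᶠ s in 𝓝[>] (0:ℝ), c ≤ f s / s ^ (p - 1)

noncomputable def pstar (p : ℝ) (N : ℕ) : EReal :=
  if p < (N:ℝ) then (((N:ℝ) * p / ((N:ℝ) - p) : ℝ) : EReal) else ⊤

noncomputable def fstar (f : ℝ → ℝ) (s : ℝ) : ℝ := sSup (f '' Icc 1 s)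

noncomputable def Fint (f : ℝ → ℝ) (s : ℝ) : ℝ := ∫ σ in (1:ℝ)..s, f σ

def Fsubl (p : ℝ) (f : ℝ → ℝ) : Prop :=
  ∃ M : ℝ, 0 < M ∧ ∀ ε > 0, ∀ᶠ s in atTop, f s / s ^ (p - 1) ≤ M + ε

def FsubcWith (p : ℝ) (N : ℕ) (f : ℝ → ℝ) (η : ℝ) : Prop :=
  (∀ c : ℝ, ∃ᶠ s in atTop, c < f s / s ^ (p - 1)) ∧
  0 < η ∧ η < 1 ∧
  ∃ L : ℝ, (L : EReal) < pstar p N ∧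
    ∀ᶠ s in atTop, fstar f s * s / Fint f (η * s) ≤ L

def Fsubc (p : ℝ) (N : ℕ) (f : ℝ → ℝ) : Prop := ∃ η : ℝ, FsubcWith p N f η

/-- A radial solution of the Neumann problem on `[R1,R2]`. -/
def NeumannSol (p : ℝ) (N : ℕ) (R1 R2 : ℝ) (f u : ℝ → ℝ) : Prop :=
  (∀ x ∈ Icc R1 R2, DifferentiableAt ℝ u x) ∧
  ContinuousOn (deriv u) (Icc R1 R2) ∧
  (∀ x ∈ Icc R1 R2, 0 < u x) ∧
  deriv u R1 = 0 ∧ deriv u R2 = 0 ∧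
  ContinuousOn (fun x => x ^ (N - 1) * phip p (deriv u x)) (Icc R1 R2) ∧
  ∀ x ∈ Ioc R1 R2,
    HasDerivAt (fun t => t ^ (N - 1) * phip p (deriv u t)) (-(x ^ (N - 1)) * f (u x)) x

noncomputable def fhat (f : ℝ → ℝ) (s : ℝ) : ℝ := if 0 ≤ s then f s else 0

noncomputable def Fhat (f : ℝ → ℝ) (s : ℝ) : ℝ := ∫ σ in (1:ℝ)..s, fhat f σ

/-- A solution of the Cauchy problem with datum `d`, for the nonlinearity `g`. -/
def CauchySol (p : ℝ) (N : ℕ) (R1 R2 : ℝ) (g u : ℝ → ℝ) (d : ℝ) : Prop :=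
  (∀ x ∈ Icc R1 R2, DifferentiableAt ℝ u x) ∧
  ContinuousOn (deriv u) (Icc R1 R2) ∧
  u R1 = d ∧ deriv u R1 = 0 ∧
  ContinuousOn (fun x => x ^ (N - 1) * phip p (deriv u x)) (Icc R1 R2) ∧
  ∀ x ∈ Ioc R1 R2,
    HasDerivAt (fun t => t ^ (N - 1) * phip p (deriv u t)) (-(x ^ (N - 1)) * g (u x)) x

noncomputable def rOne (R1 R2 : ℝ) (u : ℝ → ℝ) : ℝ :=
  sSup {x | x ∈ Icc R1 R2 ∧ ∀ s ∈ Ico R1 x, 0 < u s}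

noncomputable def rZero (R2 η d : ℝ) (u : ℝ → ℝ) : ℝ :=
  sSup {x | x ∈ Icc 0 R2 ∧ ∀ s ∈ Ico 0 x, η * d < u s}

noncomputable def energy (p : ℝ) (f u : ℝ → ℝ) (x : ℝ) : ℝ :=
  |deriv u x| ^ p / (p / (p - 1)) + Fhat f (u x)

def NonConstOn (R1 R2 : ℝ) (u : ℝ → ℝ) : Prop :=
  ∃ x ∈ Icc R1 R2, ∃ x' ∈ Icc R1 R2, u x ≠ u x'

def DistinctOn (R1 R2 : ℝ) (u v : ℝ → ℝ) : Prop :=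
  ∃ x ∈ Icc R1 R2, u x ≠ v x

noncomputable def nOverPstar (p : ℝ) (N : ℕ) : ℝ :=
  if p < (N:ℝ) then ((N:ℝ) - p) / p else 0

set_option maxHeartbeats 1000000 in
theorem stmt13 (p : ℝ) (hp : 1 < p) (N : ℕ) (hN : 1 ≤ N)
    (R2 : ℝ) (hR2 : 0 < R2)
    (f : ℝ → ℝ) (hreg : Freg f) (heq : Feq f) (h0 : Fzero p f)
    (η d : ℝ) (hη0 : 0 < η) (hη1 : η < 1) (hd : 1 / η < d)
    (u : ℝ → ℝ) (hu : CauchySol p N 0 R2 (fhat f) u d) :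
    min R2 (((1 - η) * d * (p / (p - 1))) ^ (1 / (p / (p - 1))) *
      ((N : ℝ) / fstar f d) ^ (1 / p)) ≤ rZero R2 η d u := by
  obtain ⟨hdif, hderc, hu0, hu'0, hvc, hvd⟩ := hu
  obtain ⟨hf0, hf1, hfneg, hfpos⟩ := heq
  set p' : ℝ := p / (p - 1) with hp'def
  have hp1 : (0:ℝ) < p - 1 := by linarith
  have hppos : (0:ℝ) < p := by linarith
  have hp' : 0 < p' := div_pos hppos hp1
  have hinvη : 1 < 1 / η := one_lt_one_div hη0 hη1
  have hd1 : 1 < d := hinvη.trans hd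
  have hd0 : 0 < d := lt_trans one_pos hd1
  have hηd1 : 1 < η * d := by
    rw [div_lt_iff₀ hη0] at hd; nlinarith
  have hηdd : η * d < d := by nlinarith
  have hNpos : (0:ℝ) < (N:ℝ) := by exact_mod_cast Nat.pos_of_ne_zero (by omega)
  have hNne : (N:ℝ) ≠ 0 := ne_of_gt hNpos
  -- fstar bounds
  have hIcc1d : Icc (1:ℝ) d ⊆ Ici 0 := fun x hx => le_trans zero_le_one hx.1
  have hbdd : BddAbove (f '' Icc 1 d) :=
    ((isCompact_Icc).image_of_continuousOn (hreg.1.mono hIcc1d)).bddAbove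
  have hfd : 0 < fstar f d :=
    lt_of_lt_of_le (hfpos d hd1) (le_csSup hbdd ⟨d, ⟨hd1.le, le_refl d⟩, rfl⟩)
  set Fq : ℝ := fstar f d / (N:ℝ) with hFqdef
  have hFq : 0 < Fq := div_pos hfd hNpos
  set K : ℝ := Fq ^ (1/(p-1)) with hKdef
  have hK : 0 < K := Real.rpow_pos_of_pos hFq _
  set A : ℝ := (1 - η) * d * p' with hAdef
  have hA : 0 < A := by
    have : 0 < 1 - η := by linarith
    positivity
  set C : ℝ := A ^ (1 / p') * ((N : ℝ) / fstar f d) ^ (1 / p) with hCdef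
  have hCpos : 0 < C :=
    mul_pos (Real.rpow_pos_of_pos hA _) (Real.rpow_pos_of_pos (div_pos hNpos hfd) _)
  set T : ℝ := min R2 C with hTdef
  have hTR2 : T ≤ R2 := min_le_left _ _
  have hTC : T ≤ C := min_le_right _ _
  have hcu : ContinuousOn u (Icc 0 R2) := fun x hx =>
    (hdif x hx).continuousAt.continuousWithinAt
  -- the main claim
  have key : ∀ s ∈ Ico (0:ℝ) T, η * d < u s := by
    by_contra hcon
    push_neg at hcon
    obtain ⟨s₀, hs₀, hus₀⟩ := hcon
    set B := {t : ℝ | t ∈ Icc 0 R2 ∧ u t ≤ η * d} with hBdef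
    have hBne : B.Nonempty := ⟨s₀, ⟨hs₀.1, (lt_of_lt_of_le hs₀.2 hTR2).le⟩, hus₀⟩
    have hBclosed : IsClosed B := by
      have : B = Icc 0 R2 ∩ u ⁻¹' (Iic (η * d)) := by
        ext t; simp [hBdef, mem_Iic, and_comm]
      rw [this]
      exact hcu.preimage_isClosed_of_isClosed isClosed_Icc isClosed_Iic
    have hBcpt : IsCompact B :=
      isCompact_Icc.of_isClosed_subset hBclosed (fun x hx => hx.1)
    have hBbdd : BddBelow B := ⟨0, fun x hx => hx.1.1⟩
    set r : ℝ := sInf B with hrdef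
    have hrB : r ∈ B := hBcpt.sInf_mem hBne
    have hr0R2 : r ∈ Icc 0 R2 := hrB.1
    have hur : u r ≤ η * d := hrB.2
    have hrR2 : r ≤ R2 := hr0R2.2
    have hrpos : 0 < r := by
      rcases lt_or_eq_of_le hr0R2.1 with h | h
      · exact h
      · exfalso; rw [← h] at hur; rw [hu0] at hur; linarith
    have hrs₀ : r ≤ s₀ := csInf_le hBbdd ⟨⟨hs₀.1, (lt_of_lt_of_le hs₀.2 hTR2).le⟩, hus₀⟩
    have hrC : r < C := lt_of_le_of_lt hrs₀ (lt_of_lt_of_le hs₀.2 hTC)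
    have hlt : ∀ t ∈ Ico (0:ℝ) r, η * d < u t := by
      intro t ht
      by_contra hle
      push_neg at hle
      exact absurd (csInf_le hBbdd ⟨⟨ht.1, le_trans ht.2.le hrR2⟩, hle⟩)
        (not_le.mpr ht.2)
    have hger : η * d ≤ u r := by
      have hcw : ContinuousWithinAt u (Ico 0 r) r :=
        (hdif r hr0R2).continuousAt.continuousWithinAt
      have hne : (𝓝[Ico (0:ℝ) r] r).NeBot := by
        refine mem_closure_iff_nhdsWithin_neBot.mp ?_
        rw [closure_Ico (ne_of_lt hrpos)]
        exact right_mem_Icc.mpr hrpos.le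
      exact ge_of_tendsto hcw (eventually_nhdsWithin_of_forall fun x hx => (hlt x hx).le)
    have hurEq : u r = η * d := le_antisymm hur hger
    have hge : ∀ t ∈ Icc (0:ℝ) r, η * d ≤ u t := by
      intro t ht
      rcases lt_or_eq_of_le ht.2 with h | h
      · exact (hlt t ⟨ht.1, h⟩).le
      · rw [h, hurEq]
    have hIsub : Icc (0:ℝ) r ⊆ Icc 0 R2 := Icc_subset_Icc_right hrR2
    have hmem0 : (0:ℝ) ∈ Icc (0:ℝ) r := left_mem_Icc.mpr hrpos.le
    have hmemr : r ∈ Icc (0:ℝ) r := right_mem_Icc.mpr hrpos.le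
    have hu1 : ∀ t ∈ Icc (0:ℝ) r, 1 < u t := fun t ht => lt_of_lt_of_le hηd1 (hge t ht)
    have hfh : ∀ t ∈ Icc (0:ℝ) r, fhat f (u t) = f (u t) := fun t ht => by
      unfold fhat; rw [if_pos (le_trans zero_le_one (hu1 t ht).le)]
    have hfupos : ∀ t ∈ Icc (0:ℝ) r, 0 < f (u t) := fun t ht => hfpos _ (hu1 t ht)
    set v : ℝ → ℝ := fun t => t ^ (N - 1) * phip p (deriv u t) with hvdef
    have hv0 : v 0 = 0 := by
      simp [hvdef, hu'0, phip]
    -- Step A : v ≤ 0 on [0, r]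
    have hvanti : AntitoneOn v (Icc 0 r) := by
      apply antitoneOn_of_deriv_nonpos (convex_Icc _ _) (hvc.mono hIsub)
      · rw [interior_Icc]
        exact fun x hx =>
          ((hvd x ⟨hx.1, hx.2.le.trans hrR2⟩).differentiableAt).differentiableWithinAt
      · rw [interior_Icc]
        intro x hx
        have hxI : x ∈ Icc (0:ℝ) r := Ioo_subset_Icc_self hx
        rw [(hvd x ⟨hx.1, hx.2.le.trans hrR2⟩).deriv, hfh x hxI]
        have h1 : (0:ℝ) ≤ x ^ (N-1) := pow_nonneg hx.1.le _
        nlinarith [hfupos x hxI]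
    have hvle : ∀ t ∈ Icc (0:ℝ) r, v t ≤ 0 := fun t ht => by
      have := hvanti hmem0 ht ht.1
      rw [hv0] at this; exact this
    -- Step B : deriv u ≤ 0 on [0, r]
    have hud : ∀ t ∈ Icc (0:ℝ) r, deriv u t ≤ 0 := by
      intro t ht
      rcases eq_or_lt_of_le ht.1 with h | h
      · rw [← h, hu'0]
      · by_contra hpos
        push_neg at hpos
        have h1 : 0 < phip p (deriv u t) := by
          unfold phip
          have : 0 < |deriv u t| := abs_pos.mpr (ne_of_gt hpos)
          exact mul_pos (Real.rpow_pos_of_pos this _) hpos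
        have h2 : 0 < t ^ (N-1) * phip p (deriv u t) :=
          mul_pos (pow_pos h _) h1
        exact absurd (hvle t ht) (not_le.mpr h2)
    -- Step C : u ≤ d on [0, r]
    have huanti : AntitoneOn u (Icc 0 r) := by
      apply antitoneOn_of_deriv_nonpos (convex_Icc _ _) (hcu.mono hIsub)
      · rw [interior_Icc]
        exact fun x hx => (hdif x (hIsub (Ioo_subset_Icc_self hx))).differentiableWithinAt
      · rw [interior_Icc]
        exact fun x hx => hud x (Ioo_subset_Icc_self hx)
    have huled : ∀ t ∈ Icc (0:ℝ) r, u t ≤ d := fun t ht => by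
      have := huanti hmem0 ht ht.1
      rw [hu0] at this; exact this
    -- Step D : f (u t) ≤ fstar f d
    have hfub : ∀ t ∈ Icc (0:ℝ) r, f (u t) ≤ fstar f d := fun t ht =>
      le_csSup hbdd ⟨u t, ⟨(hu1 t ht).le, huled t ht⟩, rfl⟩
    -- Step E : lower bound for v
    set h : ℝ → ℝ := fun t => v t + fstar f d * t ^ N / (N:ℝ) with hhdef
    have hh0 : h 0 = 0 := by
      simp [hhdef, hv0, zero_pow (show N ≠ 0 by omega)]
    have hderivh : ∀ x ∈ Ioo (0:ℝ) r,
        HasDerivAt h (-(x ^ (N-1)) * fhat f (u x) + fstar f d * ((N:ℝ) * x ^ (N-1)) / (N:ℝ)) x := by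
      intro x hx
      exact (hvd x ⟨hx.1, hx.2.le.trans hrR2⟩).add
        (((hasDerivAt_pow N x).const_mul (fstar f d)).div_const (N:ℝ))
    have hhmono : MonotoneOn h (Icc 0 r) := by
      apply monotoneOn_of_deriv_nonneg (convex_Icc _ _)
      · exact (hvc.mono hIsub).add
          ((continuous_const.mul (continuous_pow N)).div_const (N:ℝ)).continuousOn
      · rw [interior_Icc]
        exact fun x hx => (hderivh x hx).differentiableAt.differentiableWithinAt
      · rw [interior_Icc]
        intro x hx
        have hxI : x ∈ Icc (0:ℝ) r := Ioo_subset_Icc_self hx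
        rw [(hderivh x hx).deriv, hfh x hxI]
        have h1 : fstar f d * ((N:ℝ) * x ^ (N-1)) / (N:ℝ) = fstar f d * x ^ (N-1) := by
          field_simp
        rw [h1]
        nlinarith [mul_nonneg (pow_nonneg hx.1.le (N-1)) (sub_nonneg.mpr (hfub x hxI))]
    have hvge : ∀ t ∈ Icc (0:ℝ) r, -(Fq * t ^ N) ≤ v t := by
      intro t ht
      have := hhmono hmem0 ht ht.1
      rw [hh0] at this
      have h2 : fstar f d * t ^ N / (N:ℝ) = Fq * t ^ N := by
        rw [hFqdef]; ring
      simp only [hhdef] at this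
      linarith [h2 ▸ this]
    -- Step E' : bound |deriv u|
    have hub : ∀ t ∈ Icc (0:ℝ) r, |deriv u t| ≤ K * t ^ (1/(p-1)) := by
      intro t ht
      rcases eq_or_lt_of_le ht.1 with h | htpos
      · rw [← h, hu'0, abs_zero]
        have : (0:ℝ) ^ (1/(p-1)) = 0 := Real.zero_rpow (by positivity)
        rw [this, mul_zero]
      · -- t > 0
        have hphi : -phip p (deriv u t) = |deriv u t| ^ (p - 1) := by
          rcases eq_or_lt_of_le (hud t ht) with h0 | h0
          · rw [h0]
            unfold phip
            rw [mul_zero, neg_zero, abs_zero, Real.zero_rpow (by linarith)]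
          · have habs : 0 < |deriv u t| := abs_pos.mpr (ne_of_lt h0)
            unfold phip
            have : |deriv u t| ^ (p-1) = |deriv u t| ^ (p-2) * |deriv u t| := by
              have h9 := Real.rpow_add habs (p-2) 1
              rw [Real.rpow_one] at h9
              rw [show p - 1 = p - 2 + 1 by ring, h9]
            rw [this, abs_of_neg h0]
            ring
        have hphige : -(Fq * t) ≤ phip p (deriv u t) := by
          have h1 := hvge t ht
          have h2 : t ^ N = t ^ (N-1) * t := by
            conv_lhs => rw [← Nat.sub_add_cancel hN]
            rw [pow_succ]
          rw [h2] at h1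
          have h3 : 0 < t ^ (N-1) := pow_pos htpos _
          simp only [hvdef] at h1
          nlinarith
        have h4 : |deriv u t| ^ (p-1) ≤ Fq * t := by
          rw [← hphi]; linarith
        have h5 : (|deriv u t| ^ (p-1)) ^ (1/(p-1)) ≤ (Fq * t) ^ (1/(p-1)) :=
          Real.rpow_le_rpow (Real.rpow_nonneg (abs_nonneg _) _) h4 (by positivity)
        have h6 : (|deriv u t| ^ (p-1)) ^ (1/(p-1)) = |deriv u t| := by
          rw [← Real.rpow_mul (abs_nonneg _), mul_one_div, div_self (by linarith : p - 1 ≠ 0), Real.rpow_one]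
        have h7 : (Fq * t) ^ (1/(p-1)) = K * t ^ (1/(p-1)) := by
          rw [Real.mul_rpow hFq.le htpos.le, hKdef]
        rw [h6, h7] at h5
        exact h5
    -- Step F : monotone auxiliary G
    set G : ℝ → ℝ := fun t => u t + K * (t ^ p' / p') with hGdef
    have hexp : p' - 1 = 1/(p-1) := by
      rw [hp'def]; field_simp; ring
    have hGmono : MonotoneOn G (Icc 0 r) := by
      apply monotoneOn_of_deriv_nonneg (convex_Icc _ _)
      · apply (hcu.mono hIsub).add
        apply continuousOn_const.mul
        apply ContinuousOn.div_const
        exact fun x _ => (Real.continuousAt_rpow_const x p' (Or.inr hp'.le)).continuousWithinAt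
      · rw [interior_Icc]
        intro x hx
        exact ((hdif x (hIsub (Ioo_subset_Icc_self hx))).hasDerivAt.add
          (((Real.hasDerivAt_rpow_const (Or.inl hx.1.ne')).div_const p').const_mul K)
          ).differentiableAt.differentiableWithinAt
      · rw [interior_Icc]
        intro x hx
        have hxI : x ∈ Icc (0:ℝ) r := Ioo_subset_Icc_self hx
        have hDG : HasDerivAt G (deriv u x + K * (p' * x ^ (p'-1) / p')) x :=
          (hdif x (hIsub hxI)).hasDerivAt.add
            (((Real.hasDerivAt_rpow_const (Or.inl hx.1.ne')).div_const p').const_mul K)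
        rw [hDG.deriv]
        have h1 : K * (p' * x ^ (p'-1) / p') = K * x ^ (p'-1) := by
          field_simp
        rw [h1, hexp]
        have h2 := hub x hxI
        have h3 := neg_abs_le (deriv u x)
        linarith
    have hG0 : G 0 = d := by
      simp only [hGdef, hu0, Real.zero_rpow (ne_of_gt hp'), zero_div, mul_zero, add_zero]
    have hGr : G r = η * d + K * (r ^ p' / p') := by
      simp only [hGdef, hurEq]
    have hdle : d ≤ η * d + K * (r ^ p' / p') := by
      have := hGmono hmem0 hmemr hrpos.le
      rw [hG0, hGr] at this; exact this
    -- conclude : A ≤ K * r^p'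
    have hAle : A ≤ K * r ^ p' := by
      have h1 : (1 - η) * d ≤ K * (r ^ p' / p') := by linarith
      calc A = ((1 - η) * d) * p' := by rw [hAdef]
        _ ≤ (K * (r ^ p' / p')) * p' := mul_le_mul_of_nonneg_right h1 hp'.le
        _ = K * r ^ p' := by field_simp
    -- rpow gymnastics to show C ≤ r, contradiction
    have hKF : K = (Fq ^ (1/p)) ^ p' := by
      rw [hKdef, ← Real.rpow_mul hFq.le]
      congr 1
      rw [hp'def]; field_simp
    have hAle2 : A ≤ (Fq ^ (1/p) * r) ^ p' := by
      rw [Real.mul_rpow (Real.rpow_nonneg hFq.le _) hrpos.le, ← hKF]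
      exact hAle
    have hAr : A ^ (1/p') ≤ Fq ^ (1/p) * r := by
      have h1 := Real.rpow_le_rpow hA.le hAle2 (by positivity : (0:ℝ) ≤ 1/p')
      have h2 : ((Fq ^ (1/p) * r) ^ p') ^ (1/p') = Fq ^ (1/p) * r := by
        rw [← Real.rpow_mul (by positivity)]
        rw [mul_one_div, div_self (ne_of_gt hp'), Real.rpow_one]
      rw [h2] at h1
      exact h1
    have hCr : C ≤ r := by
      have hNF : ((N:ℝ) / fstar f d) ^ (1/p) = (Fq ^ (1/p))⁻¹ := by
        rw [show (N:ℝ) / fstar f d = Fq⁻¹ by rw [hFqdef, inv_div]]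
        exact Real.inv_rpow hFq.le _
      rw [hCdef, hNF, ← div_eq_mul_inv,
        div_le_iff₀ (Real.rpow_pos_of_pos hFq _)]
      linarith [hAr]
    linarith
  -- wrap up via sSup
  have hmemS : T ∈ {x | x ∈ Icc 0 R2 ∧ ∀ s ∈ Ico 0 x, η * d < u s} :=
    ⟨⟨le_min hR2.le hCpos.le, hTR2⟩, key⟩
  exact le_csSup ⟨R2, fun x hx => hx.1.2⟩ hmemS
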